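/- (Three-distance theorem, largest gap) For any irrational α and positive integer n, if the gaps between consecutive points {kα}, 0 ≤ k < n, on the circle take three distinct values, then the largest gap length equals the sum of the other two. -/

import Mathlib

/-- The points `{k·α}` for `0 ≤ k < n` on the circle `ℝ/ℤ`,
represented by their fractional parts in `[0,1)`. -/
def scalePoints (α : ℝ) (n : ℕ) : Set ℝ :=
  {x | ∃ k < n, x = Int.fract (k * α)}

/-- The gap (arc length, in the positive direction) from a point `x`
to the next point of `S` on the circle of circumference 1. -/
noncomputable def gapOf (S : Set ℝ) (x : ℝ) : ℝ :=
  sInf ((fun y => Int.fract (y - x)) '' (S \ {x}))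

/-- The set of gap lengths between circularly consecutive points
among `{k·α}`, `0 ≤ k < n`. -/
noncomputable def gapSet (α : ℝ) (n : ℕ) : Set ℝ :=
  (fun x => gapOf (scalePoints α n) x) '' scalePoints α n

lemma tdg_fract_sub (α : ℝ) (a b : ℤ) :
    Int.fract (((a - b : ℤ) : ℝ) * α) = Int.fract (Int.fract (a * α) - Int.fract (b * α)) := by
  have h : Int.fract (a * α) - Int.fract (b * α)
      = ((a - b : ℤ) : ℝ) * α - ((⌊(a : ℝ) * α⌋ - ⌊(b : ℝ) * α⌋ : ℤ) : ℝ) := by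
    rw [Int.fract, Int.fract]; push_cast; ring
  rw [h, Int.fract_sub_intCast]

lemma tdg_fract_add (α : ℝ) (a b : ℤ) :
    Int.fract (((a + b : ℤ) : ℝ) * α) = Int.fract (Int.fract (a * α) + Int.fract (b * α)) := by
  have h : Int.fract (a * α) + Int.fract (b * α)
      = ((a + b : ℤ) : ℝ) * α - ((⌊(a : ℝ) * α⌋ + ⌊(b : ℝ) * α⌋ : ℤ) : ℝ) := by
    rw [Int.fract, Int.fract]; push_cast; ring
  rw [h, Int.fract_sub_intCast]

lemma tdg_fract_ne_zero {α : ℝ} (hα : Irrational α) {m : ℤ} (hm : m ≠ 0) :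
    Int.fract ((m : ℝ) * α) ≠ 0 := by
  intro h
  have h2 : (m : ℝ) * α = (⌊(m : ℝ) * α⌋ : ℝ) := by
    have := Int.fract_add_floor ((m : ℝ) * α)
    rw [h] at this; linarith
  exact (hα.intCast_mul hm).ne_int _ h2

lemma tdg_inj {α : ℝ} (hα : Irrational α) {a b : ℤ}
    (h : Int.fract ((a : ℝ) * α) = Int.fract ((b : ℝ) * α)) : a = b := by
  by_contra hne
  apply tdg_fract_ne_zero hα (sub_ne_zero.mpr hne)
  rw [tdg_fract_sub, h, sub_self, Int.fract_zero]

lemma tdg_pos {α : ℝ} (hα : Irrational α) {m : ℤ} (hm : m ≠ 0) :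
    0 < Int.fract ((m : ℝ) * α) :=
  lt_of_le_of_ne (Int.fract_nonneg _) (Ne.symm (tdg_fract_ne_zero hα hm))

lemma tdg_fract_sub_one {x : ℝ} (h1 : 1 ≤ x) (h2 : x < 2) : Int.fract x = x - 1 := by
  have := Int.fract_sub_intCast x 1
  rw [← this]; push_cast
  exact Int.fract_eq_self.mpr ⟨by linarith, by linarith⟩

lemma tdg_fract_add_one {x : ℝ} (h1 : -1 ≤ x) (h2 : x < 0) : Int.fract x = x + 1 := by
  have := Int.fract_add_intCast x 1
  rw [← this]; push_cast
  exact Int.fract_eq_self.mpr ⟨by linarith, by linarith⟩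

lemma tdg_neg {α : ℝ} (hα : Irrational α) (r : ℤ) (hr : r ≠ 0) :
    Int.fract (((-r : ℤ) : ℝ) * α) = 1 - Int.fract ((r : ℝ) * α) := by
  rw [show ((-r : ℤ) : ℝ) * α = -((r : ℝ) * α) by push_cast; ring,
    Int.fract_neg (tdg_fract_ne_zero hα hr)]

lemma tdg_core (α : ℝ) (hα : Irrational α) (n : ℕ) (p q kz : ℤ)
    (hp : 1 ≤ p ∧ p ≤ (n : ℤ) - 1) (hq : 1 ≤ q ∧ q ≤ (n : ℤ) - 1)
    (hpmin : ∀ m : ℤ, 1 ≤ m → m ≤ (n : ℤ) - 1 →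
      Int.fract ((p : ℝ) * α) ≤ Int.fract ((m : ℝ) * α))
    (hqmax : ∀ m : ℤ, 1 ≤ m → m ≤ (n : ℤ) - 1 →
      Int.fract ((m : ℝ) * α) ≤ Int.fract ((q : ℝ) * α))
    (hkz : 0 ≤ kz ∧ kz ≤ (n : ℤ) - 1)
    (g : ℝ) (m₀ : ℤ) (hm₀ : m₀ ≠ 0 ∧ -kz ≤ m₀ ∧ m₀ ≤ (n : ℤ) - 1 - kz)
    (hgm : Int.fract ((m₀ : ℝ) * α) = g)
    (hle : ∀ m : ℤ, m ≠ 0 → -kz ≤ m → m ≤ (n : ℤ) - 1 - kz →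
      g ≤ Int.fract ((m : ℝ) * α)) :
    g = Int.fract ((p : ℝ) * α) ∨ g = 1 - Int.fract ((q : ℝ) * α) ∨
      g = Int.fract ((p : ℝ) * α) + (1 - Int.fract ((q : ℝ) * α)) := by
  set d := Int.fract ((p : ℝ) * α) with hd
  set e' := Int.fract ((q : ℝ) * α) with he'
  have hd0 : 0 < d := tdg_pos hα (by omega)
  have hd1 : d < 1 := Int.fract_lt_one _
  have he0 : 0 < e' := tdg_pos hα (by omega)
  have he1 : e' < 1 := Int.fract_lt_one _
  have hg0 : 0 < g := hgm ▸ tdg_pos hα hm₀.1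
  -- express g when m₀ < 0
  have hnegm : m₀ < 0 → g = 1 - Int.fract (((-m₀ : ℤ) : ℝ) * α) := by
    intro _
    have h := tdg_neg hα (-m₀) (by omega)
    rw [neg_neg, hgm] at h
    linarith
  by_cases h1 : kz ≤ (n : ℤ) - 1 - p
  · left
    have hub : g ≤ d := hle p (by omega) (by omega) (by omega)
    have hlb : d ≤ g := by
      rcases lt_or_gt_of_ne hm₀.1 with hneg | hpos
      · by_contra hc
        push_neg at hc
        have hg' := hnegm hneg
        have hkey := hpmin (-m₀ + p) (by omega) (by omega)
        have hadd : Int.fract (((-m₀ + p : ℤ) : ℝ) * α)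
            = Int.fract (((-m₀ : ℤ) : ℝ) * α) + d - 1 := by
          rw [tdg_fract_add]
          exact tdg_fract_sub_one (by linarith [Int.fract_lt_one (((-m₀ : ℤ) : ℝ) * α)])
            (by linarith [Int.fract_lt_one (((-m₀ : ℤ) : ℝ) * α)])
        have := Int.fract_lt_one (((-m₀ : ℤ) : ℝ) * α)
        linarith
      · rw [← hgm]
        exact hpmin m₀ (by omega) (by omega)
    linarith
  by_cases h2 : q ≤ kz
  · right; left
    have hub : g ≤ 1 - e' := by
      have h := hle (-q) (by omega) (by omega) (by omega)
      rwa [tdg_neg hα q (by omega)] at h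
    have hlb : 1 - e' ≤ g := by
      rcases lt_or_gt_of_ne hm₀.1 with hneg | hpos
      · have hg' := hnegm hneg
        have := hqmax (-m₀) (by omega) (by omega)
        linarith
      · by_contra hc
        push_neg at hc
        have hadd : Int.fract (((m₀ + q : ℤ) : ℝ) * α) = g + e' := by
          rw [tdg_fract_add, hgm]
          exact Int.fract_eq_self.mpr ⟨by linarith, by linarith⟩
        have := hqmax (m₀ + q) (by omega) (by omega)
        linarith
    linarith
  · right; right
    push_neg at h1 h2
    have hpq : p ≠ q := by
      intro hpq
      by_cases hp2 : 2 ≤ p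
      · have h3 := hpmin (p - 1) (by omega) (by omega)
        have h4 := hqmax (p - 1) (by omega) (by omega)
        have he'd : e' = d := by rw [he', hd, hpq]
        have h5 : Int.fract (((p - 1 : ℤ) : ℝ) * α) = d :=
          le_antisymm (he'd ▸ h4) h3
        have := tdg_inj hα (h5.trans hd)
        omega
      · omega
    have hde : d < e' :=
      lt_of_le_of_ne (hpmin q (by omega) (by omega)) (fun h => hpq (tdg_inj hα h))
    have hval : Int.fract (((p - q : ℤ) : ℝ) * α) = d + (1 - e') := by
      rw [tdg_fract_sub, ← hd, ← he', tdg_fract_add_one (by linarith) (by linarith)]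
      ring
    have hub : g ≤ d + (1 - e') := by
      rw [← hval]
      exact hle (p - q) (by omega) (by omega) (by omega)
    have hlb : d + (1 - e') ≤ g := by
      rcases lt_or_gt_of_ne hm₀.1 with hneg | hpos
      · -- m₀ < 0
        by_contra hc
        push_neg at hc
        have hg' := hnegm hneg
        have hmax := hqmax (-m₀) (by omega) (by omega)
        have hge : 1 - e' ≤ g := by linarith
        have hne2 : g ≠ 1 - e' := by
          intro hgg
          have : Int.fract (((-m₀ : ℤ) : ℝ) * α) = Int.fract ((q : ℝ) * α) := by
            rw [← he']; linarith
          have := tdg_inj hα this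
          omega
        have hstrict : 1 - e' < g := lt_of_le_of_ne hge (Ne.symm hne2)
        have hadd : Int.fract (((q + m₀ : ℤ) : ℝ) * α) = e' + g - 1 := by
          rw [tdg_fract_add, hgm, ← he']
          exact tdg_fract_sub_one (by linarith) (by linarith)
        have := hpmin (q + m₀) (by omega) (by omega)
        linarith
      · -- m₀ > 0
        by_contra hc
        push_neg at hc
        have hmin := hpmin m₀ (by omega) (by omega)
        have hge : d ≤ g := by linarith [hgm]
        have hne2 : g ≠ d := by
          intro hgg
          have : Int.fract ((m₀ : ℝ) * α) = Int.fract ((p : ℝ) * α) := by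
            rw [← hd, hgm, hgg]
          have := tdg_inj hα this
          omega
        have hstrict : d < g := lt_of_le_of_ne hge (Ne.symm hne2)
        have hsub : Int.fract (((m₀ - p : ℤ) : ℝ) * α) = g - d := by
          rw [tdg_fract_sub, hgm, ← hd]
          exact Int.fract_eq_self.mpr ⟨by linarith, by linarith⟩
        have hneg2 : Int.fract (((p - m₀ : ℤ) : ℝ) * α) = 1 - (g - d) := by
          have h := tdg_neg hα (m₀ - p) (by omega)
          rw [show -(m₀ - p) = p - m₀ from by ring] at h
          rw [h, hsub]
        have := hqmax (p - m₀) (by omega) (by omega)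
        rw [hneg2] at this
        linarith
    linarith


lemma tdg_window (α : ℝ) (hα : Irrational α) (n k : ℕ) :
    (fun y => Int.fract (y - Int.fract (k * α))) '' (scalePoints α n \ {Int.fract (k * α)}) =
    ↑(((Finset.Icc (-(k : ℤ)) ((n : ℤ) - 1 - k)).erase 0).image
        (fun m : ℤ => Int.fract ((m : ℝ) * α))) := by
  ext z
  simp only [Set.mem_image, Finset.coe_image, Finset.mem_coe, Finset.mem_erase,
    Finset.mem_Icc, Set.mem_diff, Set.mem_singleton_iff, scalePoints, Set.mem_setOf_eq]
  constructor
  · rintro ⟨y, ⟨⟨j, hj, rfl⟩, hne⟩, rfl⟩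
    refine ⟨(j : ℤ) - k, ⟨⟨?_, ?_, ?_⟩, ?_⟩⟩
    · intro h0
      apply hne
      have : (j : ℤ) = (k : ℤ) := by omega
      have : j = k := by exact_mod_cast this
      rw [this]
    · omega
    · omega
    · rw [tdg_fract_sub]
      push_cast
      rfl
  · rintro ⟨m, ⟨hm0, hml, hmu⟩, rfl⟩
    refine ⟨Int.fract ((((m + k).toNat : ℕ) : ℝ) * α), ⟨⟨(m + k).toNat, ?_, rfl⟩, ?_⟩, ?_⟩
    · omega
    · intro heq
      have hcast : (((m + k).toNat : ℤ) : ℝ) = (((m + k).toNat : ℕ) : ℝ) := by push_cast; rfl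
      have : ((m + k).toNat : ℤ) = (k : ℤ) := by
        apply tdg_inj hα
        rw [hcast]; push_cast at heq ⊢; rw [heq]
      omega
    · have h1 : ((m + k).toNat : ℤ) - (k : ℤ) = m := by omega
      have h2 : (((m + k).toNat : ℕ) : ℝ) = (((m + k).toNat : ℤ) : ℝ) := by push_cast; ring
      have h3 : ((k : ℕ) : ℝ) = ((k : ℤ) : ℝ) := by push_cast; ring
      rw [h2, h3, ← tdg_fract_sub α ((m + k).toNat : ℤ) (k : ℤ), h1]

lemma tdg_main (α : ℝ) (hα : Irrational α) (n : ℕ) (hn : 2 ≤ n) :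
    ∃ d e : ℝ, 0 < d ∧ 0 < e ∧ ∀ g ∈ gapSet α n, g = d ∨ g = e ∨ g = d + e := by
  have hI : (Finset.Icc (1 : ℤ) ((n : ℤ) - 1)).Nonempty :=
    ⟨1, by rw [Finset.mem_Icc]; omega⟩
  obtain ⟨p, hpI, hpmin⟩ :=
    Finset.exists_min_image (Finset.Icc (1 : ℤ) ((n : ℤ) - 1))
      (fun m : ℤ => Int.fract ((m : ℝ) * α)) hI
  obtain ⟨q, hqI, hqmax⟩ :=
    Finset.exists_max_image (Finset.Icc (1 : ℤ) ((n : ℤ) - 1))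
      (fun m : ℤ => Int.fract ((m : ℝ) * α)) hI
  rw [Finset.mem_Icc] at hpI hqI
  refine ⟨Int.fract ((p : ℝ) * α), 1 - Int.fract ((q : ℝ) * α),
    tdg_pos hα (by omega), by linarith [Int.fract_lt_one ((q : ℝ) * α)], ?_⟩
  rintro g ⟨x, ⟨k, hk, rfl⟩, rfl⟩
  simp only [gapOf]
  rw [tdg_window α hα n k]
  set W := ((Finset.Icc (-(k : ℤ)) ((n : ℤ) - 1 - k)).erase 0).image
    (fun m : ℤ => Int.fract ((m : ℝ) * α)) with hWdef
  have hWne : ((Finset.Icc (-(k : ℤ)) ((n : ℤ) - 1 - k)).erase 0).Nonempty := by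
    rcases Nat.eq_zero_or_pos k with h | h
    · exact ⟨1, by rw [Finset.mem_erase, Finset.mem_Icc]; omega⟩
    · exact ⟨-1, by rw [Finset.mem_erase, Finset.mem_Icc]; omega⟩
  have hmem : sInf (W : Set ℝ) ∈ (W : Set ℝ) :=
    Set.Nonempty.csInf_mem (by exact_mod_cast hWne.image _) W.finite_toSet
  have hle : ∀ m : ℤ, m ≠ 0 → -(k : ℤ) ≤ m → m ≤ (n : ℤ) - 1 - k →
      sInf (W : Set ℝ) ≤ Int.fract ((m : ℝ) * α) := by
    intro m hm0 hml hmu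
    apply csInf_le W.finite_toSet.bddBelow
    rw [Finset.mem_coe, hWdef]
    exact Finset.mem_image_of_mem _ (by rw [Finset.mem_erase, Finset.mem_Icc]; omega)
  rw [Finset.mem_coe, hWdef, Finset.mem_image] at hmem
  obtain ⟨m₀, hm₀, hgm⟩ := hmem
  rw [Finset.mem_erase, Finset.mem_Icc] at hm₀
  exact tdg_core α hα n p q k hpI hqI
    (fun m h1 h2 => hpmin m (by rw [Finset.mem_Icc]; omega))
    (fun m h1 h2 => hqmax m (by rw [Finset.mem_Icc]; omega))
    ⟨by omega, by omega⟩ _ m₀ ⟨hm₀.1, hm₀.2.1, hm₀.2.2⟩ hgm hle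

lemma tdg_triple {d e a b c : ℝ} (hd : 0 < d) (he : 0 < e) (hab : a < b) (hbc : b < c)
    (ha : a = d ∨ a = e ∨ a = d + e) (hb : b = d ∨ b = e ∨ b = d + e)
    (hc : c = d ∨ c = e ∨ c = d + e) : c = a + b := by
  rcases ha with rfl | rfl | rfl <;> rcases hb with rfl | rfl | rfl <;>
    rcases hc with rfl | rfl | rfl <;> linarith


/-- **Three-distance theorem, largest gap**: if three distinct gap lengths occur,
the largest is the sum of the other two. -/
theorem three_distance_largest_gap (α : ℝ) (hα : Irrational α) (n : ℕ) (hn : 0 < n)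
    (a b c : ℝ) (hab : a < b) (hbc : b < c)
    (h : gapSet α n = {a, b, c}) :
    c = a + b := by
  have ha : a ∈ gapSet α n := by rw [h]; left; rfl
  have hb : b ∈ gapSet α n := by rw [h]; right; left; rfl
  have hc : c ∈ gapSet α n := by rw [h]; right; right; rfl
  rcases lt_or_ge n 2 with h2 | h2
  · -- n = 1 : gapSet is a singleton, contradiction
    interval_cases n
    exfalso
    have hS : scalePoints α 1 = {Int.fract ((0 : ℕ) * α)} := by
      ext x
      simp only [scalePoints, Set.mem_setOf_eq, Set.mem_singleton_iff]
      constructor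
      · rintro ⟨k, hk, rfl⟩; interval_cases k; rfl
      · intro hx; exact ⟨0, by omega, hx⟩
    have hsingle : gapSet α 1 = {gapOf (scalePoints α 1) (Int.fract ((0 : ℕ) * α))} := by
      rw [gapSet, hS, Set.image_singleton]
    rw [hsingle] at ha hb
    rw [Set.mem_singleton_iff] at ha hb
    rw [ha] at hab
    rw [hb] at hab
    exact lt_irrefl _ hab
  · obtain ⟨d, e, hd, he, hsub⟩ := tdg_main α hα n h2
    exact tdg_triple hd he hab hbc (hsub a ha) (hsub b hb) (hsub c hc)
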